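/- Let j_1 = I_4·I_6'/I_10, j_2 = I_4²·I_12/I_10², j_3 = I_4⁵/I_10² be the Igusa invariants, where I_4, I_6', I_10, I_12 are Siegel modular forms of weights 4, 6, 10, 12 generating the graded ℚ-algebra of Siegel modular forms of genus 2 and level Sp_4(ℤ). If f/g is any quotient of two such modular forms of equal weight w (with g nonzero), then f/g can be written as a rational fraction in j_1, j_2, j_3 of total degree at most w/6. -/

import Mathlib

noncomputable section

open MvPolynomial

/- The graded `ℚ`-algebra of Siegel modular forms of genus 2 and level
`Sp₄(ℤ)` is the free polynomial algebra `ℚ[I₄, I₆', I₁₀, I₁₂]` on generators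
of weights `4, 6, 10, 12` (Igusa). We realize it as `MvPolynomial (Fin 4) ℚ`
with `X 0 = I₄`, `X 1 = I₆'`, `X 2 = I₁₀`, `X 3 = I₁₂`, graded by the weight
function `![4, 6, 10, 12]`, and work in its fraction field. -/

/-- The field of fractions of the ring of Siegel modular forms. -/
abbrev SiegelFF : Type := FractionRing (MvPolynomial (Fin 4) ℚ)

/-- The canonical map from modular forms to the fraction field. -/
def toFF : MvPolynomial (Fin 4) ℚ →+* SiegelFF :=
  algebraMap (MvPolynomial (Fin 4) ℚ) SiegelFF

/-- The first Igusa invariant `j₁ = I₄·I₆'/I₁₀`. -/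
def j1 : SiegelFF := toFF (X 0 * X 1) / toFF (X 2)

/-- The second Igusa invariant `j₂ = I₄²·I₁₂/I₁₀²`. -/
def j2 : SiegelFF := toFF (X 0 ^ 2 * X 3) / toFF (X 2 ^ 2)

/-- The third Igusa invariant `j₃ = I₄⁵/I₁₀²`. -/
def j3 : SiegelFF := toFF (X 0 ^ 5) / toFF (X 2 ^ 2)

/-- Evaluation of a rational expression `P ∈ ℚ[Y₁, Y₂, Y₃]` at the Igusa
invariants `(j₁, j₂, j₃)`. -/
def evalIgusa (P : MvPolynomial (Fin 3) ℚ) : SiegelFF :=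
  eval₂ (toFF.comp (C : ℚ →+* MvPolynomial (Fin 4) ℚ)) ![j1, j2, j3] P

lemma toFF_injective : Function.Injective toFF := IsFractionRing.injective _ _

lemma toFF_ne_zero {p : MvPolynomial (Fin 4) ℚ} (hp : p ≠ 0) : toFF p ≠ 0 := by
  intro h
  exact hp (toFF_injective (by simpa using h))

lemma toFF_X_ne_zero (i : Fin 4) : toFF (X i) ≠ 0 := toFF_ne_zero (X_ne_zero i)

lemma j3_ne_zero : j3 ≠ 0 := by
  rw [j3]
  exact div_ne_zero (toFF_ne_zero (pow_ne_zero _ (X_ne_zero _)))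
    (toFF_ne_zero (pow_ne_zero _ (X_ne_zero _)))

lemma core (a b c d v : ℕ) (hw : 4*a+6*b+10*c+12*d = 2*v) :
    toFF (X 0) ^ a * toFF (X 1) ^ b * toFF (X 2) ^ c * toFF (X 3) ^ d * toFF (X 0) ^ (2*v)
      = j1 ^ b * j2 ^ d * j3 ^ (a+b+2*c+2*d) * toFF (X 2) ^ v := by
  have h2 : toFF (X 2) ≠ 0 := toFF_X_ne_zero 2
  have hv : 2*a+3*b+5*c+6*d = v := by omega
  subst hv
  rw [j1, j2, j3, div_pow, div_pow, div_pow, map_mul, map_mul, map_pow, map_pow, map_pow]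
  field_simp
  ring

lemma weight_eq (m : Fin 4 →₀ ℕ) :
    (Finsupp.weight ![4, 6, 10, 12] m : ℕ) = 4*(m 0)+6*(m 1)+10*(m 2)+12*(m 3) := by
  rw [Finsupp.weight_apply, Finsupp.sum_fintype _ _ (by simp), Fin.sum_univ_four]
  simp [Matrix.cons_val_zero, Matrix.cons_val_one, Matrix.head_cons]
  ring

lemma monomial_eq_prod (m : Fin 4 →₀ ℕ) (q : ℚ) :
    (monomial m q : MvPolynomial (Fin 4) ℚ)
      = C q * (X 0 ^ m 0 * X 1 ^ m 1 * X 2 ^ m 2 * X 3 ^ m 3) := by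
  rw [monomial_eq, Finsupp.prod_fintype _ _ (fun i => pow_zero _), Fin.prod_univ_four]

lemma evalIgusa_term (q : ℚ) (b d n : ℕ) :
    evalIgusa (C q * (X 0 ^ b * X 1 ^ d * X 2 ^ n))
      = toFF (C q) * (j1 ^ b * j2 ^ d * j3 ^ n) := by
  simp only [evalIgusa, eval₂_mul, eval₂_pow, eval₂_C, eval₂_X, RingHom.comp_apply,
    Matrix.cons_val_zero, Matrix.cons_val_one, Matrix.head_cons, Matrix.cons_val_two,
    Matrix.tail_cons]


/-- Any quotient `f/g` of two Siegel modular forms of genus 2, level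
`Sp₄(ℤ)` and equal weight `w` (with `g ≠ 0`) can be written as a rational
fraction in the Igusa invariants `j₁, j₂, j₃` of total degree at most
`w/6`. -/
theorem siegel_modular_function_degree_le
    (w : ℕ) (f g : MvPolynomial (Fin 4) ℚ)
    (hf : IsWeightedHomogeneous ![4, 6, 10, 12] f w)
    (hg : IsWeightedHomogeneous ![4, 6, 10, 12] g w)
    (hg0 : g ≠ 0) :
    ∃ P Q : MvPolynomial (Fin 3) ℚ,
      evalIgusa Q ≠ 0 ∧
      toFF f * evalIgusa Q = toFF g * evalIgusa P ∧
      (P.totalDegree : ℝ) ≤ (w : ℝ) / 6 ∧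
      (Q.totalDegree : ℝ) ≤ (w : ℝ) / 6 := by
  -- w is even
  obtain ⟨m0, hm0⟩ : g.support.Nonempty := by
    rwa [Finset.nonempty_iff_ne_empty, ne_eq, support_eq_empty]
  have hw0 : 4*(m0 0)+6*(m0 1)+10*(m0 2)+12*(m0 3) = w := by
    rw [← weight_eq]; exact hg (mem_support_iff.mp hm0)
  obtain ⟨v, hv⟩ : ∃ v, w = 2*v := ⟨2*(m0 0)+3*(m0 1)+5*(m0 2)+6*(m0 3), by omega⟩
  -- the ceiling k of w/6
  set k : ℕ := (w+5)/6 with hk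
  have hk1 : w ≤ 6*k ∧ 6*k ≤ w+5 := by omega
  -- construction of the rational expression associated to a form
  set build : MvPolynomial (Fin 4) ℚ → MvPolynomial (Fin 3) ℚ := fun h =>
    ∑ m ∈ h.support,
      C (coeff m h) * (X 0 ^ (m 1) * X 1 ^ (m 3) *
        X 2 ^ (m 0 + m 1 + 2*(m 2) + 2*(m 3) - k)) with hbuild
  have main : ∀ h : MvPolynomial (Fin 4) ℚ, IsWeightedHomogeneous ![4, 6, 10, 12] h w →
      toFF h * toFF (X 0) ^ w = evalIgusa (build h) * (j3 ^ k * toFF (X 2) ^ v) ∧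
        ((build h).totalDegree : ℝ) ≤ (w : ℝ) / 6 := by
    intro h hh
    have hsupp : ∀ m ∈ h.support, 4*(m 0)+6*(m 1)+10*(m 2)+12*(m 3) = w := by
      intro m hm
      rw [← weight_eq]; exact hh (mem_support_iff.mp hm)
    constructor
    · -- the identity
      conv_lhs => rw [← support_sum_monomial_coeff h]
      rw [map_sum, Finset.sum_mul, hbuild]
      have : evalIgusa (∑ m ∈ h.support,
          C (coeff m h) * (X 0 ^ (m 1) * X 1 ^ (m 3) *
            X 2 ^ (m 0 + m 1 + 2*(m 2) + 2*(m 3) - k)))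
          = ∑ m ∈ h.support, evalIgusa (C (coeff m h) * (X 0 ^ (m 1) * X 1 ^ (m 3) *
            X 2 ^ (m 0 + m 1 + 2*(m 2) + 2*(m 3) - k))) :=
        map_sum (eval₂Hom (toFF.comp (C : ℚ →+* MvPolynomial (Fin 4) ℚ)) ![j1, j2, j3]) _ _
      rw [this, Finset.sum_mul]
      refine Finset.sum_congr rfl fun m hm => ?_
      have hwm := hsupp m hm
      have hek : k ≤ m 0 + m 1 + 2*(m 2) + 2*(m 3) := by omega
      rw [evalIgusa_term, monomial_eq_prod, map_mul, map_mul, map_mul, map_mul,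
        map_pow, map_pow, map_pow, map_pow]
      have hcore := core (m 0) (m 1) (m 2) (m 3) v (by omega)
      calc toFF (C (coeff m h)) * (toFF (X 0) ^ m 0 * toFF (X 1) ^ m 1 * toFF (X 2) ^ m 2 *
              toFF (X 3) ^ m 3) * toFF (X 0) ^ w
          = toFF (C (coeff m h)) * (toFF (X 0) ^ m 0 * toFF (X 1) ^ m 1 * toFF (X 2) ^ m 2 *
              toFF (X 3) ^ m 3 * toFF (X 0) ^ (2*v)) := by rw [← hv]; ring
        _ = toFF (C (coeff m h)) *
              (j1 ^ m 1 * j2 ^ m 3 * j3 ^ (m 0 + m 1 + 2*(m 2) + 2*(m 3)) * toFF (X 2) ^ v) := by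
              rw [hcore]
        _ = toFF (C (coeff m h)) * (j1 ^ m 1 * j2 ^ m 3 *
              j3 ^ (m 0 + m 1 + 2*(m 2) + 2*(m 3) - k)) * (j3 ^ k * toFF (X 2) ^ v) := by
              obtain ⟨t, ht⟩ : ∃ t, m 0 + m 1 + 2*(m 2) + 2*(m 3) = t + k :=
                ⟨_, (Nat.sub_add_cancel hek).symm⟩
              rw [ht, Nat.add_sub_cancel, pow_add]
              ring
    · -- the degree bound
      have hnat : 6 * (build h).totalDegree ≤ w := by
        have h1 : (build h).totalDegree ≤
            h.support.sup fun m => (m 1) + (m 3) + (m 0 + m 1 + 2*(m 2) + 2*(m 3) - k) := by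
          rw [hbuild]
          refine (totalDegree_finset_sum _ _).trans (Finset.sup_mono_fun fun m _ => ?_)
          refine (totalDegree_mul _ _).trans ?_
          rw [totalDegree_C, zero_add]
          refine (totalDegree_mul _ _).trans ?_
          rw [totalDegree_X_pow]
          refine add_le_add ?_ le_rfl
          refine (totalDegree_mul _ _).trans ?_
          rw [totalDegree_X_pow, totalDegree_X_pow]
        have h2 : (h.support.sup fun m => (m 1) + (m 3) + (m 0 + m 1 + 2*(m 2) + 2*(m 3) - k))
            ≤ w / 6 := by
          refine Finset.sup_le fun m hm => ?_
          have := hsupp m hm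
          omega
        calc 6 * (build h).totalDegree ≤ 6 * (w / 6) := by
              exact Nat.mul_le_mul_left 6 (h1.trans h2)
          _ ≤ w := by omega
      have := (Nat.cast_le (α := ℝ)).mpr hnat
      push_cast at this
      linarith
  obtain ⟨Hf, _⟩ := main f hf
  obtain ⟨Hg, hQdeg⟩ := main g hg
  refine ⟨build f, build g, ?_, ?_, (main f hf).2, hQdeg⟩
  · intro h0
    have hne : toFF g * toFF (X 0) ^ w ≠ 0 :=
      mul_ne_zero (toFF_ne_zero hg0) (pow_ne_zero _ (toFF_X_ne_zero 0))
    rw [Hg, h0, zero_mul] at hne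
    exact hne rfl
  · have hA : (toFF (X 0) ^ w : SiegelFF) ≠ 0 := pow_ne_zero _ (toFF_X_ne_zero 0)
    have : toFF f * evalIgusa (build g) * (toFF (X 0) ^ w * (j3 ^ k * toFF (X 2) ^ v))
        = toFF g * evalIgusa (build f) * (toFF (X 0) ^ w * (j3 ^ k * toFF (X 2) ^ v)) := by
      calc toFF f * evalIgusa (build g) * (toFF (X 0) ^ w * (j3 ^ k * toFF (X 2) ^ v))
          = (toFF f * toFF (X 0) ^ w) * (evalIgusa (build g) * (j3 ^ k * toFF (X 2) ^ v)) := by ring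
        _ = (evalIgusa (build f) * (j3 ^ k * toFF (X 2) ^ v)) * (toFF g * toFF (X 0) ^ w) := by
            rw [Hf, ← Hg]; try ring
        _ = toFF g * evalIgusa (build f) * (toFF (X 0) ^ w * (j3 ^ k * toFF (X 2) ^ v)) := by ring
    have hne : (toFF (X 0) ^ w * (j3 ^ k * toFF (X 2) ^ v) : SiegelFF) ≠ 0 :=
      mul_ne_zero hA (mul_ne_zero (pow_ne_zero _ j3_ne_zero)
        (pow_ne_zero _ (toFF_X_ne_zero 2)))
    exact mul_right_cancel₀ hne this


end
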